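/- Spectrum-shifting: Let f ∈ L_2^X have spectrum contained in D_1^n (i.e., ⟨f, χ_k^{(j)}⟩ = 0 for k > n). Let ψ_n be the composition of the transformations φ_n^{(j)} for j = 1,...,2^{n-1}. Then ⟨f ∘ ψ_n, χ_n^{(j)}⟩ = 0 for all 1 ≤ j ≤ 2^{n-1}; that is, the n-th level of the spectrum of f is shifted entirely to level n+1. -/

import Mathlib

open MeasureTheory Set

/-- The Haar function `χ_k^{(j)}` on `[0,1)`. -/
noncomputable def haar (k j : ℕ) (t : ℝ) : ℝ :=
  if ((2*j:ℝ)-2)/2^k ≤ t ∧ t < ((2*j:ℝ)-1)/2^k then (2:ℝ) ^ (((k:ℝ)-1)/2)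
  else if ((2*j:ℝ)-1)/2^k ≤ t ∧ t < (2*j:ℝ)/2^k then -((2:ℝ) ^ (((k:ℝ)-1)/2))
  else 0

/-- The transformation `φ_h^{(i)}` interchanging `Δ_{h+1}^{(4i-2)}` and `Δ_{h+1}^{(4i-1)}`. -/
noncomputable def phi (h i : ℕ) (t : ℝ) : ℝ :=
  if ((4*i:ℝ)-3)/2^(h+1) ≤ t ∧ t < ((4*i:ℝ)-2)/2^(h+1) then t + 1/2^(h+1)
  else if ((4*i:ℝ)-2)/2^(h+1) ≤ t ∧ t < ((4*i:ℝ)-1)/2^(h+1) then t - 1/2^(h+1)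
  else t

/-- The Haar–Fourier coefficient `⟨f, χ_k^{(j)}⟩`. -/
noncomputable def haarCoeff {X : Type*} [NormedAddCommGroup X] [NormedSpace ℝ X]
    (f : ℝ → X) (k j : ℕ) : X :=
  ∫ t in Ico (0:ℝ) 1, haar k j t • f t

/- ### auxiliary lemmas -/

lemma my_div_mono {E x y : ℝ} (hE : (0:ℝ) < E) (h : x ≤ y) : x/E ≤ y/E :=
  (div_le_div_iff_of_pos_right hE).mpr h

lemma my_setIntegral_Ico_add {X : Type*} [NormedAddCommGroup X] [NormedSpace ℝ X]
    (g : ℝ → X) (a b d : ℝ) :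
    ∫ t in Ico a b, g (t + d) = ∫ t in Ico (a+d) (b+d), g t := by
  have hpre : (fun x : ℝ => x + d) ⁻¹' Ico (a+d) (b+d) = Ico a b := by
    ext x
    simp only [mem_preimage, mem_Ico]
    constructor <;> rintro ⟨h1, h2⟩ <;> constructor <;> linarith
  have h := (measurePreserving_add_right volume d).setIntegral_preimage_emb
    (measurableEmbedding_addRight d) g (Ico (a+d) (b+d))
  rw [hpre] at h
  exact h

lemma my_integrableOn_Ico_add {X : Type*} [NormedAddCommGroup X] [NormedSpace ℝ X]
    (g : ℝ → X) (a b d : ℝ) (h : IntegrableOn g (Ico (a+d) (b+d))) :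
    IntegrableOn (fun t => g (t + d)) (Ico a b) := by
  have hpre : (fun x : ℝ => x + d) ⁻¹' Ico (a+d) (b+d) = Ico a b := by
    ext x
    simp only [mem_preimage, mem_Ico]
    constructor <;> rintro ⟨h1, h2⟩ <;> constructor <;> linarith
  have := ((measurePreserving_add_right volume d).integrableOn_comp_preimage
    (measurableEmbedding_addRight d)).mpr h
  rw [hpre] at this
  exact this

lemma haar_eq_pos {k j : ℕ} {t : ℝ} (h1 : ((2*j:ℝ)-2)/2^k ≤ t)
    (h2 : t < ((2*j:ℝ)-1)/2^k) : haar k j t = (2:ℝ) ^ (((k:ℝ)-1)/2) := by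
  rw [haar, if_pos ⟨h1, h2⟩]

lemma haar_eq_neg {k j : ℕ} {t : ℝ} (h1 : ((2*j:ℝ)-1)/2^k ≤ t)
    (h2 : t < (2*j:ℝ)/2^k) : haar k j t = -((2:ℝ) ^ (((k:ℝ)-1)/2)) := by
  rw [haar, if_neg, if_pos ⟨h1, h2⟩]
  rintro ⟨-, hb⟩
  exact absurd h1 (not_le.mpr hb)

lemma haar_eq_zero {k j : ℕ} {t : ℝ}
    (h : t < ((2*j:ℝ)-2)/2^k ∨ (2*j:ℝ)/2^k ≤ t) : haar k j t = 0 := by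
  have hE : (0:ℝ) < 2^k := by positivity
  have e1 : ((2*j:ℝ)-2)/2^k ≤ ((2*j:ℝ)-1)/2^k := my_div_mono hE (by linarith)
  have e2 : ((2*j:ℝ)-1)/2^k ≤ (2*j:ℝ)/2^k := my_div_mono hE (by linarith)
  rw [haar, if_neg, if_neg] <;> rintro ⟨ha, hb⟩ <;> rcases h with h | h <;> linarith

lemma phi_fix {h i : ℕ} {t : ℝ}
    (hno : t < ((4*i:ℝ)-3)/2^(h+1) ∨ ((4*i:ℝ)-1)/2^(h+1) ≤ t) : phi h i t = t := by
  have hE : (0:ℝ) < 2^(h+1) := by positivity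
  have e1 : ((4*i:ℝ)-3)/2^(h+1) ≤ ((4*i:ℝ)-2)/2^(h+1) := my_div_mono hE (by linarith)
  have e2 : ((4*i:ℝ)-2)/2^(h+1) ≤ ((4*i:ℝ)-1)/2^(h+1) := my_div_mono hE (by linarith)
  rw [phi, if_neg, if_neg] <;> rintro ⟨ha, hb⟩ <;> rcases hno with h' | h' <;> linarith

lemma phi_eq_add {h i : ℕ} {t : ℝ} (h1 : ((4*i:ℝ)-3)/2^(h+1) ≤ t)
    (h2 : t < ((4*i:ℝ)-2)/2^(h+1)) : phi h i t = t + 1/2^(h+1) := by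
  rw [phi, if_pos ⟨h1, h2⟩]

lemma phi_eq_sub {h i : ℕ} {t : ℝ} (h1 : ((4*i:ℝ)-2)/2^(h+1) ≤ t)
    (h2 : t < ((4*i:ℝ)-1)/2^(h+1)) : phi h i t = t - 1/2^(h+1) := by
  rw [phi, if_neg, if_pos ⟨h1, h2⟩]
  rintro ⟨-, hb⟩
  exact absurd h1 (not_le.mpr hb)

lemma phi_ne_fix {h i j : ℕ} (hij : i ≠ j) {t : ℝ}
    (ht1 : ((4*j:ℝ)-4)/2^(h+1) ≤ t) (ht2 : t < (4*j:ℝ)/2^(h+1)) : phi h i t = t := by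
  have hE : (0:ℝ) < 2^(h+1) := by positivity
  apply phi_fix
  rcases lt_or_gt_of_ne hij with hlt | hgt
  · right
    refine le_trans (my_div_mono hE ?_) ht1
    have : (i:ℝ) + 1 ≤ j := by exact_mod_cast Nat.succ_le_of_lt hlt
    linarith
  · left
    refine lt_of_lt_of_le ht2 (my_div_mono hE ?_)
    have : (j:ℝ) + 1 ≤ i := by exact_mod_cast Nat.succ_le_of_lt hgt
    linarith

lemma phi_mem {h j : ℕ} {t : ℝ}
    (ht1 : ((4*j:ℝ)-4)/2^(h+1) ≤ t) (ht2 : t < (4*j:ℝ)/2^(h+1)) :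
    ((4*j:ℝ)-4)/2^(h+1) ≤ phi h j t ∧ phi h j t < (4*j:ℝ)/2^(h+1) := by
  have hE : (0:ℝ) < 2^(h+1) := by positivity
  have h1e : (0:ℝ) < 1/2^(h+1) := by positivity
  rw [phi]
  split_ifs with h1 h2
  · obtain ⟨h1a, h1b⟩ := h1
    refine ⟨by linarith, ?_⟩
    calc t + 1/2^(h+1) < (((4*j:ℝ)-2)+1)/2^(h+1) := by
          rw [add_div]; linarith
      _ ≤ (4*j:ℝ)/2^(h+1) := my_div_mono hE (by linarith)
  · obtain ⟨h2a, h2b⟩ := h2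
    have hlow : ((4*j:ℝ)-4)/2^(h+1) + 1/2^(h+1) ≤ t := by
      rw [← add_div]
      exact le_trans (my_div_mono hE (by linarith)) h2a
    exact ⟨by linarith, by linarith⟩
  · exact ⟨ht1, ht2⟩

lemma foldr_phi (h : ℕ) {j : ℕ} (hj : 1 ≤ j) {t : ℝ}
    (ht1 : ((4*j:ℝ)-4)/2^(h+1) ≤ t) (ht2 : t < (4*j:ℝ)/2^(h+1))
    (l : List ℕ) (hl : l.Nodup) :
    (l.foldr (fun i g => phi h (i+1) ∘ g) id) t =
      if j - 1 ∈ l then phi h j t else t := by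
  induction l with
  | nil => simp
  | cons a l ih =>
    obtain ⟨ha, hl'⟩ := List.nodup_cons.mp hl
    simp only [List.foldr_cons, Function.comp_apply]
    rw [ih hl']
    by_cases haj : a + 1 = j
    · have hjl : j - 1 ∉ l := by
        have : j - 1 = a := by omega
        rw [this]; exact ha
      have hmem : j - 1 ∈ a :: l := by
        have : j - 1 = a := by omega
        rw [this]; exact List.mem_cons_self
      rw [if_neg hjl, if_pos hmem, show a + 1 = j from haj]
    · have hne : j - 1 ≠ a := by omega
      by_cases hjl : j - 1 ∈ l
      · rw [if_pos hjl, if_pos (List.mem_cons_of_mem _ hjl)]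
        exact phi_ne_fix (by omega) (phi_mem ht1 ht2).1 (phi_mem ht1 ht2).2
      · rw [if_neg hjl, if_neg (by simp [List.mem_cons, hne, hjl])]
        exact phi_ne_fix (by omega) ht1 ht2

lemma haarCoeff_split {X : Type*} [NormedAddCommGroup X] [NormedSpace ℝ X]
    [CompleteSpace X] (g : ℝ → X) (k j : ℕ) (hk : 1 ≤ k) (hj1 : 1 ≤ j)
    (hj2 : j ≤ 2^(k-1))
    (h1 : IntegrableOn g (Ico (((2*j:ℝ)-2)/2^k) (((2*j:ℝ)-1)/2^k)))
    (h2 : IntegrableOn g (Ico (((2*j:ℝ)-1)/2^k) ((2*j:ℝ)/2^k))) :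
    haarCoeff g k j = (2:ℝ) ^ (((k:ℝ)-1)/2) •
      ((∫ t in Ico (((2*j:ℝ)-2)/2^k) (((2*j:ℝ)-1)/2^k), g t)
        - ∫ t in Ico (((2*j:ℝ)-1)/2^k) ((2*j:ℝ)/2^k), g t) := by
  set c : ℝ := (2:ℝ) ^ (((k:ℝ)-1)/2) with hc
  have hE : (0:ℝ) < 2^k := by positivity
  have hj1' : (1:ℝ) ≤ (j:ℝ) := by exact_mod_cast hj1
  have hj2' : (j:ℝ) ≤ 2^(k-1) := by exact_mod_cast hj2
  have ham : ((2*j:ℝ)-2)/2^k ≤ ((2*j:ℝ)-1)/2^k := my_div_mono hE (by linarith)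
  have hmb : ((2*j:ℝ)-1)/2^k ≤ (2*j:ℝ)/2^k := my_div_mono hE (by linarith)
  have ha0 : (0:ℝ) ≤ ((2*j:ℝ)-2)/2^k := div_nonneg (by linarith) (le_of_lt hE)
  have hb1 : (2*j:ℝ)/2^k ≤ 1 := by
    rw [div_le_one hE]
    have hpk : (2:ℝ)^k = 2 * 2^(k-1) := by
      conv_lhs => rw [show k = (k-1)+1 by omega]
      rw [pow_succ]; ring
    rw [hpk]; linarith
  have hsub : Ico (((2*j:ℝ)-2)/2^k) ((2*j:ℝ)/2^k) ⊆ Ico (0:ℝ) 1 :=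
    Ico_subset_Ico ha0 hb1
  have heq1 : EqOn (fun t => c • g t) (fun t => haar k j t • g t)
      (Ico (((2*j:ℝ)-2)/2^k) (((2*j:ℝ)-1)/2^k)) := by
    intro t ht
    simp only
    rw [haar_eq_pos ht.1 ht.2]
  have heq2 : EqOn (fun t => (-c) • g t) (fun t => haar k j t • g t)
      (Ico (((2*j:ℝ)-1)/2^k) ((2*j:ℝ)/2^k)) := by
    intro t ht
    simp only
    rw [haar_eq_neg ht.1 ht.2]
  have hint1 : IntegrableOn (fun t => haar k j t • g t)
      (Ico (((2*j:ℝ)-2)/2^k) (((2*j:ℝ)-1)/2^k)) :=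
    MeasureTheory.IntegrableOn.congr_fun (h1.smul c) heq1 measurableSet_Ico
  have hint2 : IntegrableOn (fun t => haar k j t • g t)
      (Ico (((2*j:ℝ)-1)/2^k) ((2*j:ℝ)/2^k)) :=
    MeasureTheory.IntegrableOn.congr_fun (h2.smul (-c)) heq2 measurableSet_Ico
  have hzero : ∀ x ∈ Ico (0:ℝ) 1 \ Ico (((2*j:ℝ)-2)/2^k) ((2*j:ℝ)/2^k),
      haar k j x • g x = 0 := by
    rintro x ⟨-, hx⟩
    rw [mem_Ico, not_and_or, not_le, not_lt] at hx
    rw [haar_eq_zero hx, zero_smul]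
  rw [haarCoeff,
    setIntegral_eq_of_subset_of_forall_diff_eq_zero measurableSet_Ico hsub hzero,
    ← Ico_union_Ico_eq_Ico ham hmb,
    setIntegral_union (Ico_disjoint_Ico_same) measurableSet_Ico hint1 hint2,
    ← setIntegral_congr_fun measurableSet_Ico heq1,
    ← setIntegral_congr_fun measurableSet_Ico heq2,
    integral_smul, integral_smul, smul_sub]
  module

lemma haarCoeff_split' {X : Type*} [NormedAddCommGroup X] [NormedSpace ℝ X]
    [CompleteSpace X] (g : ℝ → X) (k j : ℕ) (hk : 1 ≤ k) (hj1 : 1 ≤ j)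
    (hj2 : j ≤ 2^(k-1)) (a m b : ℝ)
    (ha : a = ((2*j:ℝ)-2)/2^k) (hm : m = ((2*j:ℝ)-1)/2^k) (hb : b = (2*j:ℝ)/2^k)
    (h1 : IntegrableOn g (Ico a m)) (h2 : IntegrableOn g (Ico m b)) :
    haarCoeff g k j = (2:ℝ) ^ (((k:ℝ)-1)/2) •
      ((∫ t in Ico a m, g t) - ∫ t in Ico m b, g t) := by
  subst ha hm hb
  exact haarCoeff_split g k j hk hj1 hj2 h1 h2

/-- Spectrum shifting: composing with `ψ_n`, the composition of the `φ_n^{(j)}`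
for `j = 1, …, 2^{n-1}`, kills the `n`-th level of the spectrum of `f`. -/
theorem spectrum_shift {X : Type*} [NormedAddCommGroup X] [NormedSpace ℝ X]
    [CompleteSpace X] (f : ℝ → X)
    (hf : MemLp f 2 (volume.restrict (Ico (0:ℝ) 1)))
    (n : ℕ) (hn : 1 ≤ n)
    (hspec : ∀ k j : ℕ, n < k → 1 ≤ j → j ≤ 2^(k-1) → haarCoeff f k j = 0) :
    ∀ j : ℕ, 1 ≤ j → j ≤ 2^(n-1) →
      haarCoeff (f ∘ ((List.range (2^(n-1))).foldr (fun j g => phi n (j+1) ∘ g) id))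
        n j = 0 := by
  intro j hj1 hj2
  have hE : (0:ℝ) < 2^(n+1) := by positivity
  have hEne : ((2:ℝ)^(n+1)) ≠ 0 := ne_of_gt hE
  have hj1' : (1:ℝ) ≤ (j:ℝ) := by exact_mod_cast hj1
  have hj2' : (j:ℝ) ≤ 2^(n-1) := by exact_mod_cast hj2
  have hpow : 2 * 2^(n-1) = 2^n := by
    conv_rhs => rw [show n = (n-1)+1 by omega]
    rw [pow_succ]; ring
  have hpowR : (2:ℝ)^(n+1) = 4 * 2^(n-1) := by
    rw [show n+1 = (n-1)+2 by omega, pow_add]; ring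
  set δ : ℝ := 1/2^(n+1) with hδ
  set a0 : ℝ := (4*(j:ℝ)-4)/2^(n+1) with ha0
  set a1 : ℝ := (4*(j:ℝ)-3)/2^(n+1) with ha1
  set a2 : ℝ := (4*(j:ℝ)-2)/2^(n+1) with ha2
  set a3 : ℝ := (4*(j:ℝ)-1)/2^(n+1) with ha3
  set a4 : ℝ := (4*(j:ℝ))/2^(n+1) with ha4
  have h01 : a0 ≤ a1 := my_div_mono hE (by linarith)
  have h12 : a1 ≤ a2 := my_div_mono hE (by linarith)
  have h23 : a2 ≤ a3 := my_div_mono hE (by linarith)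
  have h34 : a3 ≤ a4 := my_div_mono hE (by linarith)
  have h0nonneg : (0:ℝ) ≤ a0 := div_nonneg (by linarith) (le_of_lt hE)
  have h4le1 : a4 ≤ 1 := by
    rw [ha4, div_le_one hE, hpowR]; linarith
  -- integrability of f on the quarters
  haveI : IsFiniteMeasure (volume.restrict (Ico (0:ℝ) 1)) :=
    ⟨by rw [Measure.restrict_apply_univ, Real.volume_Ico]; exact ENNReal.ofReal_lt_top⟩
  have hfi : IntegrableOn f (Ico (0:ℝ) 1) := hf.integrable one_le_two
  have hQ01 : IntegrableOn f (Ico a0 a1) :=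
    hfi.mono_set (Ico_subset_Ico h0nonneg (by linarith))
  have hQ12 : IntegrableOn f (Ico a1 a2) :=
    hfi.mono_set (Ico_subset_Ico (by linarith) (by linarith))
  have hQ23 : IntegrableOn f (Ico a2 a3) :=
    hfi.mono_set (Ico_subset_Ico (by linarith) (by linarith))
  have hQ34 : IntegrableOn f (Ico a3 a4) :=
    hfi.mono_set (Ico_subset_Ico (by linarith) h4le1)
  -- endpoint translation identities
  have t12 : a1 + δ = a2 := by rw [ha1, ha2, hδ, ← add_div]; ring_nf
  have t23 : a2 + δ = a3 := by rw [ha2, ha3, hδ, ← add_div]; ring_nf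
  have t21 : a2 + -δ = a1 := by rw [ha1, ha2, hδ]; field_simp; ring
  have t32 : a3 + -δ = a2 := by rw [ha2, ha3, hδ]; field_simp; ring
  -- casts
  have hcast1 : (((2*j-1:ℕ)):ℝ) = 2*(j:ℝ)-1 := by
    rw [Nat.cast_sub (by omega : 1 ≤ 2*j)]; push_cast; ring
  have hcast2 : (((2*j:ℕ)):ℝ) = 2*(j:ℝ) := by push_cast; ring
  -- spectrum hypotheses at level n+1
  have hb1 : 2*j ≤ 2^(n+1-1) := by
    have h2jn : 2*j ≤ 2^n := by rw [← hpow]; exact Nat.mul_le_mul_left 2 hj2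
    simpa using h2jn
  have hb2 : 2*j-1 ≤ 2^(n+1-1) := le_trans (Nat.sub_le _ _) hb1
  have key1 := haarCoeff_split' f (n+1) (2*j-1) (by omega) (by omega) hb2 a0 a1 a2
    (by rw [ha0, hcast1]; ring) (by rw [ha1, hcast1]; ring) (by rw [ha2, hcast1]; ring)
    hQ01 hQ12
  have key2 := haarCoeff_split' f (n+1) (2*j) (by omega) (by omega) hb1 a2 a3 a4
    (by rw [ha2, hcast2]; ring) (by rw [ha3, hcast2]; ring) (by rw [ha4, hcast2]; ring)
    hQ23 hQ34
  rw [hspec (n+1) (2*j-1) (by omega) (by omega) hb2] at key1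
  rw [hspec (n+1) (2*j) (by omega) (by omega) hb1] at key2
  have hcne : ((2:ℝ) ^ ((((n+1:ℕ):ℝ))-1)/2) ≠ 0 := by positivity
  have d1 : (∫ t in Ico a0 a1, f t) - ∫ t in Ico a1 a2, f t = 0 := by
    rcases smul_eq_zero.mp key1.symm with h | h
    · exact absurd h (by positivity)
    · exact h
  have d2 : (∫ t in Ico a2 a3, f t) - ∫ t in Ico a3 a4, f t = 0 := by
    rcases smul_eq_zero.mp key2.symm with h | h
    · exact absurd h (by positivity)
    · exact h
  -- the composed map
  set Ψ : ℝ → ℝ := (List.range (2^(n-1))).foldr (fun j g => phi n (j+1) ∘ g) id with hΨ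
  have hPsi : ∀ t : ℝ, a0 ≤ t → t < a4 → Ψ t = phi n j t := by
    intro t ht1 ht2
    rw [hΨ, foldr_phi n hj1 ht1 ht2 _ List.nodup_range,
      if_pos (List.mem_range.mpr (by omega))]
  -- values of Ψ on the four quarters
  have q1 : EqOn f (f ∘ Ψ) (Ico a0 a1) := by
    intro t ht
    simp only [Function.comp_apply]
    rw [hPsi t ht.1 (lt_of_lt_of_le ht.2 (by linarith)),
      phi_fix (Or.inl ht.2)]
  have q2 : EqOn (fun t => f (t + δ)) (f ∘ Ψ) (Ico a1 a2) := by
    intro t ht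
    simp only [Function.comp_apply]
    rw [hPsi t (le_trans h01 ht.1) (lt_of_lt_of_le ht.2 (by linarith)),
      phi_eq_add ht.1 ht.2]
  have q3 : EqOn (fun t => f (t + -δ)) (f ∘ Ψ) (Ico a2 a3) := by
    intro t ht
    simp only [Function.comp_apply]
    rw [hPsi t (by linarith [ht.1]) (lt_of_lt_of_le ht.2 h34),
      phi_eq_sub ht.1 ht.2, sub_eq_add_neg]
  have q4 : EqOn f (f ∘ Ψ) (Ico a3 a4) := by
    intro t ht
    simp only [Function.comp_apply]
    rw [hPsi t (by linarith [ht.1]) ht.2, phi_fix (Or.inr ht.1)]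
  -- integrability of f ∘ Ψ on the two halves
  have hI1 : IntegrableOn (f ∘ Ψ) (Ico a0 a1) :=
    MeasureTheory.IntegrableOn.congr_fun hQ01 q1 measurableSet_Ico
  have hI2 : IntegrableOn (f ∘ Ψ) (Ico a1 a2) := by
    refine MeasureTheory.IntegrableOn.congr_fun ?_ q2 measurableSet_Ico
    exact my_integrableOn_Ico_add f a1 a2 δ (by rw [t12, t23]; exact hQ23)
  have hI3 : IntegrableOn (f ∘ Ψ) (Ico a2 a3) := by
    refine MeasureTheory.IntegrableOn.congr_fun ?_ q3 measurableSet_Ico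
    exact my_integrableOn_Ico_add f a2 a3 (-δ) (by rw [t21, t32]; exact hQ12)
  have hI4 : IntegrableOn (f ∘ Ψ) (Ico a3 a4) :=
    MeasureTheory.IntegrableOn.congr_fun hQ34 q4 measurableSet_Ico
  -- apply the splitting lemma to f ∘ Ψ at level n
  have key := haarCoeff_split' (f ∘ Ψ) n j hn hj1 hj2 a0 a2 a4
    (by rw [ha0, show n = (n-1)+1 by omega, pow_succ]; field_simp; ring)
    (by rw [ha2, show n = (n-1)+1 by omega, pow_succ]; field_simp; ring)
    (by rw [ha4, show n = (n-1)+1 by omega, pow_succ]; field_simp; ring)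
    (by rw [← Ico_union_Ico_eq_Ico h01 h12]; exact hI1.union hI2)
    (by rw [← Ico_union_Ico_eq_Ico h23 h34]; exact hI3.union hI4)
  rw [hΨ] at key
  rw [key]
  -- compute the two half-integrals
  have e1 : ∫ t in Ico a0 a2, (f ∘ Ψ) t
      = (∫ t in Ico a0 a1, f t) + ∫ t in Ico a2 a3, f t := by
    rw [← Ico_union_Ico_eq_Ico h01 h12,
      setIntegral_union Ico_disjoint_Ico_same measurableSet_Ico hI1 hI2,
      ← setIntegral_congr_fun measurableSet_Ico q1,
      ← setIntegral_congr_fun measurableSet_Ico q2,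
      my_setIntegral_Ico_add f a1 a2 δ, t12, t23]
  have e2 : ∫ t in Ico a2 a4, (f ∘ Ψ) t
      = (∫ t in Ico a1 a2, f t) + ∫ t in Ico a3 a4, f t := by
    rw [← Ico_union_Ico_eq_Ico h23 h34,
      setIntegral_union Ico_disjoint_Ico_same measurableSet_Ico hI3 hI4,
      ← setIntegral_congr_fun measurableSet_Ico q3,
      ← setIntegral_congr_fun measurableSet_Ico q4,
      my_setIntegral_Ico_add f a2 a3 (-δ), t21, t32]
  rw [← hΨ, e1, e2]
  have : ((∫ t in Ico a0 a1, f t) + ∫ t in Ico a2 a3, f t)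
      - ((∫ t in Ico a1 a2, f t) + ∫ t in Ico a3 a4, f t)
      = ((∫ t in Ico a0 a1, f t) - ∫ t in Ico a1 a2, f t)
        + ((∫ t in Ico a2 a3, f t) - ∫ t in Ico a3 a4, f t) := by abel
  rw [this, d1, d2, add_zero, smul_zero]
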